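/- For all η > 0 and ρ² > 0, ∫_{−∞}^{∞} exp(−√(η (η + x²/ρ²))) dx = 2 √(η ρ²) K₁(η); that is, the hyperbolic density with shape η and scale ρ² integrates to 1 over ℝ. -/

import Mathlib

open MeasureTheory Real

/-- The modified Bessel function of the second kind of order `ν`, for `z > 0`. -/
noncomputable def besselK (ν z : ℝ) : ℝ :=
  ∫ t in Set.Ioi (0 : ℝ), Real.exp (-z * Real.cosh t) * Real.cosh (ν * t)

/-- The hyperbolic density with shape `η` and scale `ρ²` integrates to one over `ℝ`. -/
theorem hyperbolic_normalization (η ρ2 : ℝ) (hη : 0 < η) (hρ : 0 < ρ2) :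
    ∫ x : ℝ, Real.exp (-Real.sqrt (η * (η + x ^ 2 / ρ2)))
      = 2 * Real.sqrt (η * ρ2) * besselK 1 η := by
  set g : ℝ → ℝ := fun x => Real.exp (-Real.sqrt (η * (η + x ^ 2 / ρ2))) with hg
  set c : ℝ := Real.sqrt (η * ρ2) with hc
  have hc_pos : 0 < c := Real.sqrt_pos.mpr (mul_pos hη hρ)
  have hb : (0 : ℝ) < Real.sqrt (η / ρ2) := Real.sqrt_pos.mpr (div_pos hη hρ)
  set b : ℝ := Real.sqrt (η / ρ2) with hbdef
  -- pointwise bound : g x ≤ exp (-b * |x|)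
  have hbound : ∀ x : ℝ, g x ≤ Real.exp (-b * |x|) := by
    intro x
    have h1 : b * |x| ≤ Real.sqrt (η * (η + x ^ 2 / ρ2)) := by
      have : b * |x| = Real.sqrt (η / ρ2 * x ^ 2) := by
        rw [Real.sqrt_mul (by positivity), Real.sqrt_sq_eq_abs]
      rw [this]
      apply Real.sqrt_le_sqrt
      have : η / ρ2 * x ^ 2 = η * (x ^ 2 / ρ2) := by ring
      rw [this]
      have : (0 : ℝ) ≤ η * η := by positivity
      nlinarith
    exact Real.exp_le_exp.mpr (by linarith)
  have hg_nonneg : ∀ x, 0 ≤ g x := fun x => (Real.exp_pos _).le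
  have hg_cont : Continuous g := by
    apply Real.continuous_exp.comp
    exact (Real.continuous_sqrt.comp (by continuity)).neg
  -- integrability of g
  have hInt : Integrable g := by
    have hsymm : norm ∘ g =ᵐ[volume] norm ∘ g ∘ Neg.neg := by
      filter_upwards with x
      simp [hg, Function.comp, neg_pow]
    have ho : g =O[Filter.atTop] fun x => Real.exp (-b * x) := by
      rw [Asymptotics.isBigO_iff]
      refine ⟨1, ?_⟩
      filter_upwards [Filter.eventually_ge_atTop (0 : ℝ)] with x hx
      rw [one_mul, Real.norm_eq_abs, Real.norm_eq_abs, abs_of_nonneg (hg_nonneg x),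
        abs_of_nonneg (Real.exp_pos _).le]
      have := hbound x
      rwa [abs_of_nonneg hx] at this
    have hgI : IntegrableAtFilter (fun x => Real.exp (-b * x)) Filter.atTop volume :=
      ⟨Set.Ioi 0, Filter.Ioi_mem_atTop 0, exp_neg_integrableOn_Ioi 0 hb⟩
    exact hg_cont.locallyIntegrable.integrable_of_isBigO_atTop_of_norm_isNegInvariant
      hsymm ho hgI
  -- g is even
  have hg_even : ∀ x, g (-x) = g x := by intro x; simp [hg, neg_pow]
  -- split the integral
  have hsplit : ∫ x : ℝ, g x = 2 * ∫ x in Set.Ioi (0 : ℝ), g x := by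
    rw [← integral_add_compl measurableSet_Iic hInt]
    have h1 : ∫ x in Set.Iic (0 : ℝ), g x = ∫ x in Set.Ioi (0 : ℝ), g x := by
      have : ∫ x in Set.Iic (0 : ℝ), g x = ∫ x in Set.Iic (0 : ℝ), g (-x) := by
        exact setIntegral_congr_fun measurableSet_Iic fun x _ => (hg_even x).symm
      rw [this, integral_comp_neg_Iic]
      norm_num [integral_Ici_eq_integral_Ioi]
    rw [Set.compl_Iic, h1]
    ring
  -- change of variables on Ioi 0 : x = c * sinh t
  have himg : (fun t : ℝ => c * Real.sinh t) '' Set.Ioi (0 : ℝ) = Set.Ioi (0 : ℝ) := by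
    ext y
    constructor
    · rintro ⟨t, ht, rfl⟩
      exact mul_pos hc_pos (by simpa using Real.sinh_lt_sinh.mpr ht)
    · intro hy
      refine ⟨Real.arsinh (y / c), ?_, ?_⟩
      · have : (0 : ℝ) < y / c := div_pos hy hc_pos
        have := Real.arsinh_lt_arsinh.mpr this
        rwa [Real.arsinh_zero] at this
      · show c * Real.sinh (Real.arsinh (y / c)) = y
        rw [Real.sinh_arsinh, mul_div_cancel₀ _ hc_pos.ne']
  have hderiv : ∀ t ∈ Set.Ioi (0 : ℝ),
      HasDerivWithinAt (fun t : ℝ => c * Real.sinh t) (c * Real.cosh t) (Set.Ioi 0) t := by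
    intro t _
    exact ((Real.hasDerivAt_sinh t).const_mul c).hasDerivWithinAt
  have hinj : Set.InjOn (fun t : ℝ => c * Real.sinh t) (Set.Ioi 0) := by
    intro a _ b' _ h
    exact Real.sinh_injective (mul_left_cancel₀ hc_pos.ne' h)
  have hcov := integral_image_eq_integral_abs_deriv_smul measurableSet_Ioi hderiv hinj g
  rw [himg] at hcov
  -- simplify the transformed integrand
  have hkey : ∀ t : ℝ, |c * Real.cosh t| • g (c * Real.sinh t)
      = c * (Real.exp (-η * Real.cosh t) * Real.cosh (1 * t)) := by
    intro t
    have hch := Real.cosh_pos (x := t)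
    have h1 : (c * Real.sinh t) ^ 2 / ρ2 = η * Real.sinh t ^ 2 := by
      have : c ^ 2 = η * ρ2 := Real.sq_sqrt (by positivity)
      field_simp [mul_pow, this]
      rw [this]; ring
    have h2 : η * (η + (c * Real.sinh t) ^ 2 / ρ2) = (η * Real.cosh t) ^ 2 := by
      rw [h1]
      have := Real.cosh_sq t
      nlinarith
    have h3 : Real.sqrt (η * (η + (c * Real.sinh t) ^ 2 / ρ2)) = η * Real.cosh t := by
      rw [h2, Real.sqrt_sq (by positivity)]
    rw [smul_eq_mul, abs_of_pos (mul_pos hc_pos hch)]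
    simp only [hg, h3, one_mul]
    ring_nf
  rw [hsplit, hcov]
  simp only [hkey]
  rw [integral_const_mul]
  rw [besselK]
  ring
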